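/- The function x ↦ tan(x)/x is strictly increasing on the interval (0, π/2) and strictly increasing on the interval (π/2, π); that is, if 0 < x < y < π/2 then tan(x)/x < tan(y)/y, and if π/2 < x < y < π then tan(x)/x < tan(y)/y. -/

import Mathlib

open Real

private lemma tan_div_hasDerivAt {x : ℝ} (hx : x ≠ 0) (hc : Real.cos x ≠ 0) :
    HasDerivAt (fun t => Real.tan t / t)
      ((1 / Real.cos x ^ 2 * x - Real.tan x * 1) / x ^ 2) x :=
  (Real.hasDerivAt_tan hc).div (hasDerivAt_id x) hx

private lemma deriv_pos {x : ℝ} (h0 : 0 < x) (hπ : x < Real.pi) (hc : Real.cos x ≠ 0) :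
    0 < (1 / Real.cos x ^ 2 * x - Real.tan x * 1) / x ^ 2 := by
  apply div_pos _ (by positivity)
  have hkey : Real.sin x * Real.cos x < x := by
    rcases le_or_gt (Real.cos x) 0 with h | h
    · have hs : 0 < Real.sin x := Real.sin_pos_of_pos_of_lt_pi h0 hπ
      nlinarith
    · have := Real.sin_lt (by linarith : (0:ℝ) < 2 * x)
      rw [Real.sin_two_mul] at this
      nlinarith
  have h2 : (0:ℝ) < Real.cos x ^ 2 := by positivity
  have : 1 / Real.cos x ^ 2 * x - Real.tan x * 1
      = (x - Real.sin x * Real.cos x) / Real.cos x ^ 2 := by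
    rw [Real.tan_eq_sin_div_cos]; field_simp
  rw [this]
  exact div_pos (by linarith) h2

private lemma mono_on (a b : ℝ) (hab : Set.Ioo a b ⊆ Set.Ioo 0 Real.pi)
    (hc : ∀ x ∈ Set.Ioo a b, Real.cos x ≠ 0) :
    StrictMonoOn (fun t => Real.tan t / t) (Set.Ioo a b) := by
  apply strictMonoOn_of_deriv_pos (convex_Ioo a b)
  · intro x hx
    have hx' := hab hx
    exact ((tan_div_hasDerivAt (ne_of_gt hx'.1) (hc x hx)).continuousAt).continuousWithinAt
  · intro x hx
    rw [interior_Ioo] at hx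
    have hx' := hab hx
    rw [(tan_div_hasDerivAt (ne_of_gt hx'.1) (hc x hx)).deriv]
    exact deriv_pos hx'.1 hx'.2 (hc x hx)

/-- The function `x ↦ tan(x)/x` is strictly increasing on `(0, π/2)`
and strictly increasing on `(π/2, π)`. -/
theorem stmt_10 :
    (∀ x y : ℝ, 0 < x → x < y → y < Real.pi / 2 → Real.tan x / x < Real.tan y / y) ∧
    (∀ x y : ℝ, Real.pi / 2 < x → x < y → y < Real.pi → Real.tan x / x < Real.tan y / y) := by
  have hπ := Real.pi_pos
  constructor
  · intro x y hx hxy hy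
    have h := mono_on 0 (Real.pi / 2)
      (fun t ht => ⟨ht.1, by have := ht.2; linarith⟩)
      (fun t ht => ne_of_gt (Real.cos_pos_of_mem_Ioo ⟨by linarith [ht.1], ht.2⟩))
    exact h ⟨hx, by linarith⟩ ⟨by linarith, hy⟩ hxy
  · intro x y hx hxy hy
    have h := mono_on (Real.pi / 2) Real.pi
      (fun t ht => ⟨by linarith [ht.1], ht.2⟩)
      (fun t ht => ne_of_lt (Real.cos_neg_of_pi_div_two_lt_of_lt ht.1 (by linarith [ht.2])))
    exact h ⟨hx, by linarith⟩ ⟨by linarith, hy⟩ hxy
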